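/- Let p be a prime number with p ≡ 4 or 7 (mod 9), so that p = π₁π₂ with prime elements π₁, π₂ of ℤ[ζ₃] satisfying π₂ = τ(π₁) (τ complex conjugation). If π₁ ≡ π₂ ≡ 1 (mod 3ℤ[ζ₃]), then π₁ ≢ 1 (mod λ³) and π₂ ≢ 1 (mod λ³) in ℤ[ζ₃], where λ = 1 − ζ₃. -/

import Mathlib

open IntermediateField NumberField
open scoped nonZeroDivisors

set_option synthInstance.maxHeartbeats 1000000
set_option maxHeartbeats 2000000

noncomputable section

/-- The primitive cube root of unity `ζ₃ = e^{2πi/3}`. -/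
def zeta3 : ℂ := Complex.exp (2 * Real.pi * Complex.I / 3)

lemma zeta3_isPrimitiveRoot : IsPrimitiveRoot zeta3 3 := by
  simpa [zeta3] using Complex.isPrimitiveRoot_exp 3 (by norm_num)

lemma isIntegral_zeta3 : IsIntegral ℚ zeta3 :=
  (zeta3_isPrimitiveRoot.isIntegral (by norm_num)).tower_top

/-- `k₀ = ℚ(ζ₃)`, realized as a subfield of `ℂ`. -/
def k0c : IntermediateField ℚ ℂ := ℚ⟮zeta3⟯

instance : NumberField k0c where
  to_finiteDimensional := by
    apply IntermediateField.finiteDimensional_adjoin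
    rintro x rfl
    exact isIntegral_zeta3

/-- `ζ₃` as an element of `k₀ = ℚ(ζ₃)`. -/
def zetaE : ↥k0c := ⟨zeta3, IntermediateField.mem_adjoin_simple_self ℚ zeta3⟩

lemma isIntegral_zetaE : IsIntegral ℤ zetaE := by
  have h : algebraMap ↥k0c ℂ zetaE = zeta3 := rfl
  rw [← isIntegral_algebraMap_iff (algebraMap ↥k0c ℂ).injective, h]
  exact zeta3_isPrimitiveRoot.isIntegral (by norm_num)

/-- `ζ₃` as an element of the ring of Eisenstein integers `ℤ[ζ₃] = 𝓞(ℚ(ζ₃))`. -/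
def zetaO : 𝓞 k0c := ⟨zetaE, isIntegral_zetaE⟩

/-- `λ = 1 - ζ₃`, the prime element of `ℤ[ζ₃]` above `3`. -/
def lamO : 𝓞 k0c := 1 - zetaO

lemma zeta3_cube : zeta3 ^ 3 = 1 := zeta3_isPrimitiveRoot.pow_eq_one
lemma zeta3_ne_one : zeta3 ≠ 1 := zeta3_isPrimitiveRoot.ne_one (by norm_num)
lemma zeta3_sq_add : 1 + zeta3 + zeta3 ^ 2 = 0 := by
  have h : (zeta3 - 1) * (1 + zeta3 + zeta3 ^ 2) = 0 := by ring_nf; linear_combination zeta3_cube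
  rcases mul_eq_zero.mp h with h | h
  · exact absurd (sub_eq_zero.mp h) zeta3_ne_one
  · exact h
lemma conj_zeta3 : (starRingEnd ℂ) zeta3 = zeta3 ^ 2 := by
  have h1 : zeta3 * (starRingEnd ℂ) zeta3 = 1 := by
    rw [Complex.mul_conj]
    norm_cast
    rw [Complex.normSq_eq_norm_sq]
    have : ‖zeta3‖ = 1 := by
      rw [zeta3]
      have : 2 * ↑Real.pi * Complex.I / 3 = (↑(2 * Real.pi / 3) : ℝ) * Complex.I := by
        push_cast; ring
      rw [this, Complex.norm_exp_ofReal_mul_I]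
    rw [this]; norm_num
  have h2 : zeta3 * zeta3 ^ 2 = 1 := by rw [← pow_succ']; exact zeta3_cube
  have hz : zeta3 ≠ 0 := by intro h; simp [h] at h2
  exact mul_left_cancel₀ hz (h1.trans h2.symm)

def conjQ : ℂ →ₐ[ℚ] ℂ := (Complex.conjAe.restrictScalars ℚ).toAlgHom

lemma conjQ_apply (z : ℂ) : conjQ z = (starRingEnd ℂ) z := rfl

lemma conj_mem (x : ↥k0c) : (starRingEnd ℂ) (x : ℂ) ∈ k0c := by
  have hx : (x : ℂ) ∈ ℚ⟮zeta3⟯ := x.2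
  have h1 : conjQ (x : ℂ) ∈ (ℚ⟮zeta3⟯).map conjQ := ⟨x, hx, rfl⟩
  rw [IntermediateField.adjoin_map, Set.image_singleton] at h1
  have h2 : ℚ⟮conjQ zeta3⟯ ≤ ℚ⟮zeta3⟯ := by
    rw [conjQ_apply, conj_zeta3]
    apply IntermediateField.adjoin_le_iff.mpr
    intro y hy
    rcases hy with rfl
    exact pow_mem (IntermediateField.mem_adjoin_simple_self ℚ zeta3) 2
  exact h2 h1
def conjK : ↥k0c →+* ↥k0c where
  toFun x := ⟨(starRingEnd ℂ) (x : ℂ), conj_mem x⟩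
  map_one' := by ext; simp
  map_mul' x y := by ext; push_cast; simp
  map_zero' := by ext; simp
  map_add' x y := by ext; push_cast; simp

def conjO : 𝓞 k0c →+* 𝓞 k0c := RingOfIntegers.mapRingHom conjK

def embC : 𝓞 k0c →+* ℂ := (algebraMap ↥k0c ℂ).comp (algebraMap (𝓞 k0c) ↥k0c)

lemma embC_apply (x : 𝓞 k0c) : embC x = ((x : ↥k0c) : ℂ) := rfl

lemma embC_injective : Function.Injective embC :=
  (algebraMap ↥k0c ℂ).injective.comp NumberField.RingOfIntegers.coe_injective

lemma embC_conjO (x : 𝓞 k0c) : embC (conjO x) = (starRingEnd ℂ) (embC x) := rfl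

lemma embC_zetaO : embC zetaO = zeta3 := rfl

lemma hz3O : zetaO ^ 3 = 1 := by
  apply embC_injective
  rw [map_pow, embC_zetaO, map_one]
  exact zeta3_cube

lemma lamsq : lamO ^ 2 = -3 * zetaO := by
  apply embC_injective
  have : embC lamO = 1 - zeta3 := rfl
  rw [map_pow, this, map_mul, map_neg, map_ofNat, embC_zetaO]
  linear_combination zeta3_sq_add

lemma hconjlam : conjO lamO = -(zetaO ^ 2) * lamO := by
  apply embC_injective
  have h1 : embC lamO = 1 - zeta3 := rfl
  rw [embC_conjO, map_mul, map_neg, map_pow, embC_zetaO, h1]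
  rw [map_sub, map_one, conj_zeta3]
  linear_combination -zeta3_cube
lemma lamO_ne_zero : lamO ≠ 0 := by
  intro h
  apply zeta3_ne_one
  have := congrArg embC h
  have h1 : embC lamO = 1 - zeta3 := rfl
  rw [h1, map_zero, sub_eq_zero] at this
  exact this.symm

lemma key (a b : 𝓞 k0c) (h : ((b : ↥k0c) : ℂ) = (starRingEnd ℂ) ((a : ↥k0c) : ℂ)) :
    lamO ^ 3 ∣ a - 1 → lamO ^ 3 ∣ b - 1 := by
  rintro ⟨c, hc⟩
  have hb : b = conjO a := embC_injective (by rw [embC_apply, h]; rfl)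
  subst hb
  refine ⟨(-(zetaO ^ 2)) ^ 3 * conjO c, ?_⟩
  have h2 := congrArg conjO hc
  rw [map_sub, map_one, map_mul, map_pow, hconjlam] at h2
  rw [h2]; ring

lemma not_unit_lamO : ¬ IsUnit lamO := by
  intro hu
  obtain ⟨w, hw⟩ : lamO ∣ (1 : 𝓞 k0c) := hu.dvd
  have h3e : (3 : 𝓞 k0c) * (-(zetaO) * w ^ 2) = 1 := by
    linear_combination -(1 + lamO * w) * hw - w ^ 2 * lamsq
  set e : 𝓞 k0c := -(zetaO) * w ^ 2 with he
  have hek : (3 : ↥k0c) * (e : ↥k0c) = 1 := by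
    have := congrArg (algebraMap (𝓞 k0c) ↥k0c) h3e
    rwa [map_mul, map_ofNat, map_one] at this
  have h3ne : (3 : ↥k0c) ≠ 0 := three_ne_zero
  have he2 : (e : ↥k0c) = algebraMap ℚ ↥k0c (1/3) := by
    rw [map_div₀, map_one, map_ofNat]
    rw [eq_div_iff h3ne]
    linear_combination hek
  have hint : IsIntegral ℤ ((1:ℚ)/3) := by
    rw [← isIntegral_algebraMap_iff (R := ℤ) (algebraMap ℚ ↥k0c).injective, ← he2]
    exact e.2
  obtain ⟨y, hy⟩ := IsIntegrallyClosed.isIntegral_iff.mp hint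
  have hy3 : (3 * y : ℚ) = 1 := by
    have : (y : ℚ) = 1/3 := hy
    rw [this]; norm_num
  have : (3 * y : ℤ) = 1 := by exact_mod_cast hy3
  omega

/-- **Lemma 3.1**: let `p ≡ 4, 7 (mod 9)` be a prime, `p = π₁π₂` with prime elements
`π₁, π₂` of `ℤ[ζ₃]`, `π₂ = τ(π₁)` (complex conjugation). If `π₁ ≡ π₂ ≡ 1 (mod 3ℤ[ζ₃])`
then `π₁ ≢ 1 (mod λ³)` and `π₂ ≢ 1 (mod λ³)`, where `λ = 1 - ζ₃`. -/
theorem primary_prime_not_one_mod_lambda_cubed_split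
    (p : ℕ) (hp : p.Prime) (hp9 : p % 9 = 4 ∨ p % 9 = 7)
    (π₁ π₂ : 𝓞 k0c) (hπ₁ : Prime π₁) (hπ₂ : Prime π₂)
    (hfact : (p : 𝓞 k0c) = π₁ * π₂)
    (hconj : ((π₂ : ↥k0c) : ℂ) = (starRingEnd ℂ) ((π₁ : ↥k0c) : ℂ))
    (hmod : (3 : 𝓞 k0c) ∣ (π₁ - 1) ∧ (3 : 𝓞 k0c) ∣ (π₂ - 1)) :
    ¬ (lamO ^ 3 ∣ (π₁ - 1)) ∧ ¬ (lamO ^ 3 ∣ (π₂ - 1)) := by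
  set m : ℕ := p / 3 with hm
  have hpm : p = 3 * m + 1 := by omega
  have hm3 : ¬ (3 ∣ m) := by omega
  have hcore : ¬ (lamO ^ 3 ∣ (π₁ - 1) ∧ lamO ^ 3 ∣ (π₂ - 1)) := by
    rintro ⟨⟨a, ha⟩, ⟨b, hb⟩⟩
    have h3m : 3 * (m : 𝓞 k0c) = lamO ^ 3 * (a * π₂ + b) := by
      have hpc : ((p : ℕ) : 𝓞 k0c) = 3 * (m : 𝓞 k0c) + 1 := by rw [hpm]; push_cast; ring
      linear_combination -hpc + hfact + π₂ * ha + hb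
    have h3 : (3 : 𝓞 k0c) = lamO ^ 2 * (-(zetaO ^ 2)) := by
      linear_combination zetaO ^ 2 * lamsq - 3 * hz3O
    have hl2 : lamO ^ 2 ≠ 0 := pow_ne_zero _ lamO_ne_zero
    have hc : lamO ^ 2 * (-(zetaO ^ 2) * (m : 𝓞 k0c)) =
        lamO ^ 2 * (lamO * (a * π₂ + b)) := by
      linear_combination h3m - (m : 𝓞 k0c) * h3
    have hcc := mul_left_cancel₀ hl2 hc
    have hmdvd : lamO ∣ (m : 𝓞 k0c) :=
      ⟨-(zetaO) * (a * π₂ + b), by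
        linear_combination (-(zetaO)) * hcc - (m : 𝓞 k0c) * hz3O⟩
    have h3dvd : lamO ∣ (3 : 𝓞 k0c) := ⟨lamO * (-(zetaO ^ 2)), by linear_combination h3⟩
    have hcop : IsCoprime (3 : ℤ) ((m : ℕ) : ℤ) := by
      rw [Int.isCoprime_iff_gcd_eq_one]
      have : Nat.Coprime 3 m := (Nat.prime_three).coprime_iff_not_dvd.mpr hm3
      simpa [Int.gcd] using this
    have hcopO : IsCoprime (3 : 𝓞 k0c) ((m : ℕ) : 𝓞 k0c) := by
      have := hcop.map (algebraMap ℤ (𝓞 k0c))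
      simpa using this
    exact not_unit_lamO (hcopO.isUnit_of_dvd' h3dvd hmdvd)
  constructor
  · intro h; exact hcore ⟨h, key π₁ π₂ hconj h⟩
  · intro h
    refine hcore ⟨key π₂ π₁ ?_ h, h⟩
    rw [hconj, Complex.conj_conj]

end
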